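/- Let u, v : [0,T] → H be differentiable curves in a real inner product space H with u(0) = v(0), satisfying u'(t) = G(t, u(t)) and v'(t) = G(t, v(t)) + w(t), where G : ℝ × H → H and w : [0,T] → H is continuous. Assume there is a continuous λ : [0,T] → ℝ such that ⟨G(t,x) - G(t,y), x - y⟩ ≤ λ(t)·‖x - y‖² for all x, y ∈ H and t ∈ [0,T]. Then ‖u(T) - v(T)‖ ≤ ∫₀ᵀ exp(∫ₜᵀ λ(s) ds)·‖w(t)‖ dt. -/

import Mathlib

open MeasureTheory intervalIntegral

theorem pinn_error_bound_inner_product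
    {H : Type*} [NormedAddCommGroup H] [InnerProductSpace ℝ H]
    (T : ℝ) (hT : 0 < T)
    (u v : ℝ → H) (G : ℝ → H → H) (w : ℝ → H) (l : ℝ → ℝ)
    (hw_cont : Continuous w) (hl_cont : Continuous l)
    (h0 : u 0 = v 0)
    (hu : ∀ t ∈ Set.Icc (0:ℝ) T, HasDerivAt u (G t (u t)) t)
    (hv : ∀ t ∈ Set.Icc (0:ℝ) T, HasDerivAt v (G t (v t) + w t) t)
    (hG : ∀ t ∈ Set.Icc (0:ℝ) T, ∀ x y : H,
      (inner ℝ (G t x - G t y) (x - y) : ℝ) ≤ l t * ‖x - y‖ ^ 2) :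
    ‖u T - v T‖ ≤ ∫ t in (0:ℝ)..T, Real.exp (∫ s in t..T, l s) * ‖w t‖ := by
  set e : ℝ → H := fun t => u t - v t with he_def
  set Λ : ℝ → ℝ := fun t => ∫ s in (0:ℝ)..t, l s with hΛ_def
  have hΛd : ∀ t, HasDerivAt Λ (l t) t := fun t =>
    intervalIntegral.integral_hasDerivAt_right (hl_cont.intervalIntegrable 0 t)
      hl_cont.aestronglyMeasurable.stronglyMeasurableAtFilter hl_cont.continuousAt
  have hΛcont : Continuous Λ := continuous_iff_continuousAt.2 fun t => (hΛd t).continuousAt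
  set g : ℝ → ℝ := fun t => Real.exp (-Λ t) * ‖w t‖ with hg_def
  have hg_cont : Continuous g := (hΛcont.neg.rexp).mul hw_cont.norm
  have hg_nonneg : ∀ t, 0 ≤ g t := fun t =>
    mul_nonneg (Real.exp_pos _).le (norm_nonneg _)
  set Gg : ℝ → ℝ := fun t => ∫ s in (0:ℝ)..t, g s with hGg_def
  have hGgd : ∀ t, HasDerivAt Gg (g t) t := fun t =>
    intervalIntegral.integral_hasDerivAt_right (hg_cont.intervalIntegrable 0 t)
      hg_cont.aestronglyMeasurable.stronglyMeasurableAtFilter hg_cont.continuousAt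
  -- derivative of e on Icc
  have he_d : ∀ t ∈ Set.Icc (0:ℝ) T,
      HasDerivAt e (G t (u t) - G t (v t) - w t) t := by
    intro t ht
    have := (hu t ht).sub (hv t ht)
    rw [sub_add_eq_sub_sub] at this
    exact this
  -- ψ
  set ψ : ℝ → ℝ := fun t => Real.exp (-(2 * Λ t)) * (inner ℝ (e t) (e t) : ℝ) with hψ_def
  have hψd : ∀ t ∈ Set.Icc (0:ℝ) T,
      HasDerivAt ψ (Real.exp (-(2 * Λ t)) * (-(2 * l t)) * (inner ℝ (e t) (e t) : ℝ)
        + Real.exp (-(2 * Λ t)) *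
          ((inner ℝ (e t) (G t (u t) - G t (v t) - w t) : ℝ)
            + (inner ℝ (G t (u t) - G t (v t) - w t) (e t) : ℝ))) t := by
    intro t ht
    have h1 : HasDerivAt (fun t => Real.exp (-(2 * Λ t)))
        (Real.exp (-(2 * Λ t)) * (-(2 * l t))) t := by
      have := (((hΛd t).const_mul (2:ℝ)).neg).exp
      simpa [mul_comm] using this
    have h2 : HasDerivAt (fun t => (inner ℝ (e t) (e t) : ℝ))
        ((inner ℝ (e t) (G t (u t) - G t (v t) - w t) : ℝ)
          + (inner ℝ (G t (u t) - G t (v t) - w t) (e t) : ℝ)) t :=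
      (he_d t ht).inner ℝ (he_d t ht)
    exact h1.mul h2
  have hψ_eq : ∀ t, ψ t = (Real.exp (-Λ t) * ‖e t‖) ^ 2 := by
    intro t
    have : (inner ℝ (e t) (e t) : ℝ) = ‖e t‖ ^ 2 := real_inner_self_eq_norm_sq (e t)
    rw [hψ_def]
    simp only [this]
    rw [show (-(2 * Λ t)) = -Λ t + -Λ t by ring, Real.exp_add]
    ring
  have hψ_nonneg : ∀ t, 0 ≤ ψ t := fun t => (hψ_eq t).symm ▸ sq_nonneg _
  -- key derivative bound: ψ' ≤ 2 g √ψ on Icc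
  have hψd_bound : ∀ t ∈ Set.Icc (0:ℝ) T,
      Real.exp (-(2 * Λ t)) * (-(2 * l t)) * (inner ℝ (e t) (e t) : ℝ)
        + Real.exp (-(2 * Λ t)) *
          ((inner ℝ (e t) (G t (u t) - G t (v t) - w t) : ℝ)
            + (inner ℝ (G t (u t) - G t (v t) - w t) (e t) : ℝ))
      ≤ 2 * g t * (Real.exp (-Λ t) * ‖e t‖) := by
    intro t ht
    have hinner : (inner ℝ (G t (u t) - G t (v t) - w t) (e t) : ℝ)
        ≤ l t * ‖e t‖ ^ 2 + ‖w t‖ * ‖e t‖ := by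
      have h1 : (inner ℝ (G t (u t) - G t (v t) - w t) (e t) : ℝ)
          = (inner ℝ (G t (u t) - G t (v t)) (e t) : ℝ) + (inner ℝ (-(w t)) (e t) : ℝ) := by
        rw [← inner_add_left]
        congr 1; abel
      rw [h1]
      have h2 := hG t ht (u t) (v t)
      have h3 : (inner ℝ (-(w t)) (e t) : ℝ) ≤ ‖w t‖ * ‖e t‖ := by
        calc (inner ℝ (-(w t)) (e t) : ℝ) ≤ ‖-(w t)‖ * ‖e t‖ := real_inner_le_norm _ _
        _ = ‖w t‖ * ‖e t‖ := by rw [norm_neg]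
      exact add_le_add h2 h3
    have hsym : (inner ℝ (e t) (G t (u t) - G t (v t) - w t) : ℝ)
        = (inner ℝ (G t (u t) - G t (v t) - w t) (e t) : ℝ) := real_inner_comm _ _
    rw [hsym]
    have hexp : (0:ℝ) < Real.exp (-(2 * Λ t)) := Real.exp_pos _
    have hE : (inner ℝ (e t) (e t) : ℝ) = ‖e t‖ ^ 2 := real_inner_self_eq_norm_sq (e t)
    rw [hE]
    have key : Real.exp (-(2 * Λ t)) * (-(2 * l t)) * ‖e t‖ ^ 2
        + Real.exp (-(2 * Λ t)) * (2 * (l t * ‖e t‖ ^ 2 + ‖w t‖ * ‖e t‖))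
        = 2 * g t * (Real.exp (-Λ t) * ‖e t‖) := by
      rw [hg_def]
      simp only
      rw [show (-(2 * Λ t)) = -Λ t + -Λ t by ring, Real.exp_add]
      ring
    calc Real.exp (-(2 * Λ t)) * (-(2 * l t)) * ‖e t‖ ^ 2
        + Real.exp (-(2 * Λ t)) * ((inner ℝ (G t (u t) - G t (v t) - w t) (e t) : ℝ)
          + (inner ℝ (G t (u t) - G t (v t) - w t) (e t) : ℝ))
        ≤ Real.exp (-(2 * Λ t)) * (-(2 * l t)) * ‖e t‖ ^ 2
          + Real.exp (-(2 * Λ t)) * (2 * (l t * ‖e t‖ ^ 2 + ‖w t‖ * ‖e t‖)) := by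
          gcongr
          have := hinner
          linarith
      _ = 2 * g t * (Real.exp (-Λ t) * ‖e t‖) := key
  -- continuity of ψ on Icc
  have hψ_cont : ContinuousOn ψ (Set.Icc 0 T) := fun t ht =>
    ((hψd t ht).continuousAt).continuousWithinAt
  -- epsilon argument
  have main : ∀ ε : ℝ, 0 < ε → Real.exp (-Λ T) * ‖e T‖ ≤ Gg T + ε := by
    intro ε hε
    set χ : ℝ → ℝ := fun t => Real.sqrt (ψ t + ε ^ 2) with hχ_def
    have hne : ∀ t, ψ t + ε ^ 2 ≠ 0 := fun t => by
      have := hψ_nonneg t; positivity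
    have hχ_pos : ∀ t, 0 < χ t := fun t =>
      Real.sqrt_pos.2 (by have := hψ_nonneg t; positivity)
    have hχd : ∀ t ∈ Set.Icc (0:ℝ) T,
        HasDerivAt χ ((Real.exp (-(2 * Λ t)) * (-(2 * l t)) * (inner ℝ (e t) (e t) : ℝ)
          + Real.exp (-(2 * Λ t)) *
            ((inner ℝ (e t) (G t (u t) - G t (v t) - w t) : ℝ)
              + (inner ℝ (G t (u t) - G t (v t) - w t) (e t) : ℝ)))
          / (2 * Real.sqrt (ψ t + ε ^ 2))) t := by
      intro t ht
      exact ((hψd t ht).add_const (ε ^ 2)).sqrt (hne t)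
    set F : ℝ → ℝ := fun t => Gg t - χ t with hF_def
    have hF_mono : MonotoneOn F (Set.Icc 0 T) := by
      apply monotoneOn_of_deriv_nonneg (convex_Icc 0 T)
      · intro t ht
        exact ((hGgd t).continuousAt.sub (hχd t ht).continuousAt).continuousWithinAt
      · intro t ht
        rw [interior_Icc] at ht
        exact ((hGgd t).sub (hχd t (Set.Ioo_subset_Icc_self ht))).differentiableAt.differentiableWithinAt
      · intro t ht
        rw [interior_Icc] at ht
        have htI := Set.Ioo_subset_Icc_self ht
        rw [show deriv F t = _ from ((hGgd t).sub (hχd t htI)).deriv]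
        have hb := hψd_bound t htI
        have hle : Real.sqrt (ψ t) ≤ Real.sqrt (ψ t + ε ^ 2) :=
          Real.sqrt_le_sqrt (by nlinarith)
        have hsq : Real.sqrt (ψ t) = Real.exp (-Λ t) * ‖e t‖ := by
          rw [hψ_eq t, Real.sqrt_sq (by positivity)]
        have h2 : Real.exp (-(2 * Λ t)) * (-(2 * l t)) * (inner ℝ (e t) (e t) : ℝ)
            + Real.exp (-(2 * Λ t)) *
              ((inner ℝ (e t) (G t (u t) - G t (v t) - w t) : ℝ)
                + (inner ℝ (G t (u t) - G t (v t) - w t) (e t) : ℝ))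
            ≤ 2 * g t * Real.sqrt (ψ t + ε ^ 2) := by
          calc _ ≤ 2 * g t * (Real.exp (-Λ t) * ‖e t‖) := hb
          _ = 2 * g t * Real.sqrt (ψ t) := by rw [hsq]
          _ ≤ 2 * g t * Real.sqrt (ψ t + ε ^ 2) := by
              have := hg_nonneg t; gcongr
        rw [sub_nonneg, div_le_iff₀ (by have := hψ_nonneg t; positivity : (0:ℝ) < 2 * Real.sqrt (ψ t + ε ^ 2))]
        calc _ ≤ 2 * g t * Real.sqrt (ψ t + ε ^ 2) := h2
        _ = g t * (2 * Real.sqrt (ψ t + ε ^ 2)) := by ring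
    have hF0T : F 0 ≤ F T :=
      hF_mono (Set.left_mem_Icc.2 hT.le) (Set.right_mem_Icc.2 hT.le) hT.le
    have hGg0 : Gg 0 = 0 := intervalIntegral.integral_same
    have hψ0 : ψ 0 = 0 := by
      rw [hψ_def]; simp [he_def, h0]
    have hχ0 : χ 0 = ε := by
      rw [hχ_def]; simp only [hψ0, zero_add]
      exact Real.sqrt_sq hε.le
    have hsqT : Real.exp (-Λ T) * ‖e T‖ = Real.sqrt (ψ T) := by
      rw [hψ_eq T, Real.sqrt_sq (by positivity)]
    have h1 : Real.sqrt (ψ T) ≤ χ T := Real.sqrt_le_sqrt (by nlinarith [sq_nonneg ε])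
    rw [hF_def] at hF0T
    simp only [hGg0, hχ0] at hF0T
    rw [hsqT]
    linarith
  have hfinal : Real.exp (-Λ T) * ‖e T‖ ≤ Gg T :=
    le_of_forall_pos_le_add main
  -- rewrite the RHS
  have hRHS : (∫ t in (0:ℝ)..T, Real.exp (∫ s in t..T, l s) * ‖w t‖)
      = Real.exp (Λ T) * Gg T := by
    rw [hGg_def, ← intervalIntegral.integral_const_mul]
    apply intervalIntegral.integral_congr
    intro t _
    show Real.exp (∫ s in t..T, l s) * ‖w t‖ = Real.exp (Λ T) * g t
    have hsub : (∫ s in t..T, l s) = Λ T - Λ t :=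
      (intervalIntegral.integral_interval_sub_left (hl_cont.intervalIntegrable 0 T)
        (hl_cont.intervalIntegrable 0 t)).symm
    rw [hsub, hg_def]
    simp only
    rw [show Λ T - Λ t = Λ T + (-Λ t) by ring, Real.exp_add]
    ring
  rw [hRHS]
  have : ‖e T‖ = Real.exp (Λ T) * (Real.exp (-Λ T) * ‖e T‖) := by
    rw [← mul_assoc, ← Real.exp_add]; simp
  rw [show u T - v T = e T from rfl, this]
  have := Real.exp_pos (Λ T)
  gcongr
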